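/- Let L be a Lie algebra over a field of characteristic 0 such that every derivation of L is inner. If the center of L is nontrivial, then L is not solvable. -/

import Mathlib

/-- If every derivation of a Lie algebra `L` over a field of characteristic `0` is inner and the
center of `L` is nontrivial, then `L` is not solvable. -/
theorem stmt2 (k L : Type*) [Field k] [CharZero k] [LieRing L] [LieAlgebra k L]
    [FiniteDimensional k L]
    (hinner : ∀ d : LieDerivation k L L, ∃ x : L, d = LieDerivation.ad k L x)
    (hcenter : LieAlgebra.center k L ≠ ⊥) :
    ¬ LieAlgebra.IsSolvable L := by
  intro hsol
  -- a nonzero central element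
  obtain ⟨z, hzmem, hz0⟩ : ∃ z, z ∈ LieAlgebra.center k L ∧ z ≠ 0 := by
    by_contra h
    push_neg at h
    exact hcenter ((LieSubmodule.eq_bot_iff _).mpr (fun m hm => h m hm))
  have hzc : ∀ x : L, ⁅x, z⁆ = 0 := (LieModule.mem_maxTrivSubmodule k L L z).mp hzmem
  -- the derived subalgebra is proper
  have hD : LieAlgebra.derivedSeries k L 1 ≠ ⊤ := by
    intro h
    obtain ⟨n, hn⟩ := (LieAlgebra.isSolvable_iff k L).mp hsol
    have := LieIdeal.derivedSeries_eq_top n h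
    rw [hn] at this
    exact hz0 ((LieSubmodule.eq_bot_iff (⊥ : LieIdeal k L)).mp rfl z
      (by rw [this]; exact LieSubmodule.mem_top z))
  -- a functional vanishing on brackets, with f x₀ = 1
  obtain ⟨x, hx⟩ : ∃ x : L, x ∉ LieAlgebra.derivedSeries k L 1 := by
    by_contra h
    push_neg at h
    exact hD (by rw [eq_top_iff]; exact fun y _ => h y)
  set Dsub : Submodule k L := (LieAlgebra.derivedSeries k L 1 : Submodule k L) with hDsub
  have hbr : ∀ a b : L, ⁅a, b⁆ ∈ Dsub := by
    intro a b
    have : ⁅a, b⁆ ∈ LieAlgebra.derivedSeries k L 1 := by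
      rw [LieAlgebra.derivedSeries_def, LieAlgebra.derivedSeriesOfIdeal_succ,
        LieAlgebra.derivedSeriesOfIdeal_zero]
      exact LieSubmodule.lie_mem_lie (LieSubmodule.mem_top a) (LieSubmodule.mem_top b)
    exact this
  obtain ⟨φ, hφ⟩ : ∃ φ : Module.Dual k (L ⧸ Dsub), φ (Submodule.Quotient.mk x) ≠ 0 := by
    by_contra h
    push_neg at h
    have := (Module.forall_dual_apply_eq_zero_iff k (Submodule.Quotient.mk (p := Dsub) x)).mp h
    rw [Submodule.Quotient.mk_eq_zero] at this
    exact hx this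
  set f0 : L →ₗ[k] k := φ ∘ₗ Dsub.mkQ with hf0
  set f : L →ₗ[k] k := (f0 x)⁻¹ • f0 with hf
  have hfD : ∀ a b : L, f ⁅a, b⁆ = 0 := by
    intro a b
    have : f0 ⁅a, b⁆ = 0 := by
      simp only [hf0, LinearMap.comp_apply, Submodule.mkQ_apply]
      rw [(Submodule.Quotient.mk_eq_zero Dsub).mpr (hbr a b), map_zero]
    simp [hf, this]
  have hfx : f x = 1 := by
    have hx0 : f0 x ≠ 0 := hφ
    simp [hf, inv_mul_cancel₀ hx0]
  -- the centralizer of ker f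
  set C : Submodule k L :=
    { carrier := {y | ∀ m : L, f m = 0 → ⁅y, m⁆ = 0}
      add_mem' := fun ha hb m hm => by rw [add_lie, ha m hm, hb m hm, add_zero]
      zero_mem' := fun m _ => zero_lie m
      smul_mem' := fun c y hy m hm => by rw [smul_lie, hy m hm, smul_zero] } with hC
  have hmemC : ∀ y : L, y ∈ C ↔ ∀ m : L, f m = 0 → ⁅y, m⁆ = 0 := fun y => Iff.rfl
  -- key decomposition: for y ∈ C, ⁅y, b⁆ = f b • ⁅y, x⁆
  have hdec : ∀ y : L, y ∈ C → ∀ b : L, ⁅y, b⁆ = f b • ⁅y, x⁆ := by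
    intro y hy b
    have h1 : f (b - f b • x) = 0 := by
      simp [map_sub, map_smul, hfx, smul_eq_mul]
    have h2 : ⁅y, b - f b • x⁆ = 0 := hy _ h1
    rw [lie_sub, lie_smul, sub_eq_zero] at h2
    rw [h2]
  -- the endomorphism w ↦ ⁅w, x⁆ of C
  have hCstable : ∀ w : L, w ∈ C → ⁅w, x⁆ ∈ C := by
    intro w hw m hm
    have : ⁅⁅w, x⁆, m⁆ = ⁅w, ⁅x, m⁆⁆ - ⁅x, ⁅w, m⁆⁆ := lie_lie w x m
    rw [this, hw m hm, lie_zero, sub_zero, hw ⁅x, m⁆ (hfD x m)]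
  set e : C →ₗ[k] C :=
    { toFun := fun w => ⟨⁅(w : L), x⁆, hCstable w w.2⟩
      map_add' := fun a b => by ext; simp [add_lie]
      map_smul' := fun c a => by ext; simp [smul_lie] } with he
  -- e is surjective
  have hsurj : Function.Surjective e := by
    rintro ⟨y, hy⟩
    set d : LieDerivation k L L :=
      { toLinearMap := LinearMap.smulRight f y
        leibniz' := by
          intro a b
          simp only [LinearMap.smulRight_apply]
          rw [hfD a b, zero_smul, lie_smul, lie_smul]
          rw [← lie_skew a y, ← lie_skew b y, hdec y hy a, hdec y hy b]
          simp only [smul_neg, smul_smul]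
          rw [mul_comm]
          abel } with hd
    obtain ⟨w, hw⟩ := hinner d
    have hwap : ∀ v : L, f v • y = ⁅w, v⁆ := by
      intro v
      have h1 : d v = (LieDerivation.ad k L w) v := by rw [hw]
      have h2 : (LieDerivation.ad k L w) v = ⁅w, v⁆ := by simp
      simpa [hd, LinearMap.smulRight_apply] using h1.trans h2
    have hwC : w ∈ C := by
      intro m hm
      rw [← hwap m, hm, zero_smul]
    refine ⟨⟨w, hwC⟩, ?_⟩
    apply Subtype.ext
    show ⁅w, x⁆ = y
    rw [← hwap x, hfx, one_smul]
  -- e is injective since C is finite-dimensional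
  have hinj : Function.Injective e := (LinearMap.injective_iff_surjective).mpr hsurj
  -- but z is a nonzero element of the kernel
  have hzC : z ∈ C := fun m _ => by rw [← lie_skew, hzc m, neg_zero]
  have h1 : e ⟨z, hzC⟩ = e 0 := by
    apply Subtype.ext
    show ⁅z, x⁆ = _
    have : ⁅z, x⁆ = 0 := by rw [← lie_skew, hzc x, neg_zero]
    simp [this]
  exact hz0 (by simpa using congrArg Subtype.val (hinj h1))
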